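/- arXiv:2505.18791 — 2 statements merged into one kernel-verified Lean document; each statement's English description precedes it below -/
import Mathlib

section
/- Let x and y be nonzero precision-p binary floating-point numbers with exponents e_x, e_y. Then |y| ≤ ulp(x) if and only if e_x - e_y > p - 1, or (e_x - e_y = p - 1 and y is a power of two, i.e., |y| = 2^(e_y)). -/
/-- x is a nonzero precision-p binary float with exponent e:
x = ±m·2^(e-(p-1)) with 2^(p-1) ≤ m < 2^p. -/
def FpVal (p : ℕ) (e : ℤ) (x : ℝ) : Prop :=
  ∃ m : ℤ, (2 : ℤ) ^ (p - 1) ≤ |m| ∧ |m| < (2 : ℤ) ^ p ∧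
    x = (m : ℝ) * (2 : ℝ) ^ (e - ((p : ℤ) - 1))

/-- ulp-domination characterization: |y| ≤ ulp(x) iff ex - ey > p - 1, or
ex - ey = p - 1 and y is a power of two. -/
theorem ulp_dominates_iff (p : ℕ) (hp : 1 ≤ p) (x y : ℝ) (ex ey : ℤ)
    (hx : FpVal p ex x) (hy : FpVal p ey y) :
    |y| ≤ (2 : ℝ) ^ (ex - ((p : ℤ) - 1)) ↔
      (ex - ey > (p : ℤ) - 1 ∨ (ex - ey = (p : ℤ) - 1 ∧ |y| = (2 : ℝ) ^ ey)) := by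
  obtain ⟨m, hm1, hm2, hyeq⟩ := hy
  have h2 : (0:ℝ) < (2:ℝ) ^ (ey - ((p:ℤ)-1)) := by positivity
  have hpe : ((p:ℤ)-1) = ((p-1 : ℕ) : ℤ) := by push_cast [hp]; ring
  have hcast1 : (((2:ℤ) ^ (p-1) : ℤ) : ℝ) = (2:ℝ) ^ ((p:ℤ)-1) := by
    rw [hpe]; push_cast; rw [zpow_natCast]
  have hcast2 : (((2:ℤ) ^ p : ℤ) : ℝ) = (2:ℝ) ^ (p:ℤ) := by
    push_cast; rw [zpow_natCast]
  have hm1' : (2:ℝ) ^ ((p:ℤ)-1) ≤ ((|m|:ℤ):ℝ) := by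
    rw [← hcast1]; exact_mod_cast hm1
  have hm2' : ((|m|:ℤ):ℝ) < (2:ℝ) ^ (p:ℤ) := by
    rw [← hcast2]; exact_mod_cast hm2
  have habs : |y| = ((|m|:ℤ):ℝ) * (2:ℝ) ^ (ey - ((p:ℤ)-1)) := by
    rw [hyeq, abs_mul, abs_of_pos h2]; push_cast; ring
  have key : (|y| ≤ (2:ℝ) ^ (ex - ((p:ℤ)-1))) ↔ ((|m|:ℤ):ℝ) ≤ (2:ℝ) ^ (ex - ey) := by
    rw [habs, show ex - ((p:ℤ)-1) = (ex - ey) + (ey - ((p:ℤ)-1)) by ring,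
      zpow_add₀ (two_ne_zero)]
    exact mul_le_mul_iff_of_pos_right h2
  have keyeq : (|y| = (2:ℝ) ^ ey) ↔ ((|m|:ℤ):ℝ) = (2:ℝ) ^ ((p:ℤ)-1) := by
    have h2ey : (2:ℝ)^ey = (2:ℝ)^((p:ℤ)-1) * 2^(ey-((p:ℤ)-1)) := by
      rw [← zpow_add₀ (two_ne_zero), show ((p:ℤ)-1)+(ey-((p:ℤ)-1)) = ey by ring]
    rw [habs, h2ey]
    constructor
    · intro h; exact mul_right_cancel₀ h2.ne' h
    · intro h; rw [h]
  rw [key]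
  rcases lt_trichotomy (ex - ey) ((p:ℤ)-1) with h | h | h
  · constructor
    · intro hle
      exfalso
      have : (2:ℝ) ^ (ex - ey) < (2:ℝ) ^ ((p:ℤ)-1) :=
        zpow_lt_zpow_right₀ one_lt_two h
      linarith
    · rintro (h' | ⟨h', _⟩) <;> omega
  · rw [keyeq]
    constructor
    · intro hle
      right
      exact ⟨h, le_antisymm (by rw [← h]; exact hle) hm1'⟩
    · rintro (h' | ⟨h', he⟩)
      · omega
      · rw [he, h]
  · constructor
    · intro _; exact Or.inl h
    · intro _
      have hpk : (p:ℤ) ≤ ex - ey := by omega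
      have : (2:ℝ) ^ (p:ℤ) ≤ (2:ℝ) ^ (ex - ey) :=
        zpow_le_zpow_right₀ one_le_two hpk
      linarith
end

section
/- Let x and y be nonzero precision-p binary floating-point numbers with exponents e_x, e_y. Then |y| ≤ (1/2)·ulp(x) if and only if e_x - e_y > p, or (e_x - e_y = p and |y| = 2^(e_y)). -/
/-- QD-domination characterization: |y| ≤ (1/2)·ulp(x) iff ex - ey > p, or
ex - ey = p and y is a power of two. -/
theorem qd_dominates_iff (p : ℕ) (hp : 1 ≤ p) (x y : ℝ) (ex ey : ℤ)
    (hx : FpVal p ex x) (hy : FpVal p ey y) :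
    |y| ≤ (2 : ℝ) ^ (ex - (p : ℤ)) ↔
      (ex - ey > (p : ℤ) ∨ (ex - ey = (p : ℤ) ∧ |y| = (2 : ℝ) ^ ey)) := by
  obtain ⟨m, hm1, hm2, hyeq⟩ := hy
  have h2 : (0:ℝ) < 2 := by norm_num
  have hpz : ((2:ℤ) ^ (p-1) : ℝ) = (2:ℝ) ^ (((p:ℤ)) - 1) := by
    push_cast
    rw [← zpow_natCast]
    congr 1
    omega
  have hpz2 : ((2:ℤ) ^ p : ℝ) = (2:ℝ) ^ ((p:ℤ)) := by
    push_cast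
    rw [← zpow_natCast]
  have habs : |y| = (|m| : ℝ) * (2:ℝ) ^ (ey - ((p:ℤ) - 1)) := by
    rw [hyeq, abs_mul, abs_of_pos (zpow_pos h2 _)]
  have hm1' : (2:ℝ) ^ (((p:ℤ)) - 1) ≤ (|m| : ℝ) := by
    rw [← hpz]; exact_mod_cast hm1
  have hm2' : (|m| : ℝ) < (2:ℝ) ^ ((p:ℤ)) := by
    rw [← hpz2]; exact_mod_cast hm2
  have hzpos : ∀ a : ℤ, (0:ℝ) < (2:ℝ) ^ a := fun a => zpow_pos h2 a
  constructor
  · intro h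
    rw [habs] at h
    -- derive ey ≤ ex - p
    have h1 : (2:ℝ) ^ ey ≤ (2:ℝ) ^ (ex - (p:ℤ)) := by
      calc (2:ℝ) ^ ey = (2:ℝ) ^ (((p:ℤ)) - 1) * (2:ℝ) ^ (ey - ((p:ℤ) - 1)) := by
            rw [← zpow_add₀ (by norm_num : (2:ℝ) ≠ 0)]; ring_nf
        _ ≤ (|m| : ℝ) * (2:ℝ) ^ (ey - ((p:ℤ) - 1)) := by
            exact mul_le_mul_of_nonneg_right hm1' (le_of_lt (hzpos _))
        _ ≤ _ := h
    have hle : ey ≤ ex - (p:ℤ) := by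
      exact_mod_cast (zpow_le_zpow_iff_right₀ (by norm_num : (1:ℝ) < 2)).mp h1
    rcases lt_or_eq_of_le hle with hlt | heq
    · left; omega
    · right
      constructor
      · omega
      · -- |m| ≤ 2^(p-1), so |m| = 2^(p-1)
        have : (|m| : ℝ) * (2:ℝ) ^ (ey - ((p:ℤ) - 1)) ≤
            (2:ℝ) ^ (((p:ℤ)) - 1) * (2:ℝ) ^ (ey - ((p:ℤ) - 1)) := by
          calc (|m| : ℝ) * (2:ℝ) ^ (ey - ((p:ℤ) - 1)) ≤ (2:ℝ) ^ (ex - (p:ℤ)) := h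
            _ = (2:ℝ) ^ ey := by rw [← heq]
            _ = _ := by rw [← zpow_add₀ (by norm_num : (2:ℝ) ≠ 0)]; ring_nf
        have hmle : (|m| : ℝ) ≤ (2:ℝ) ^ (((p:ℤ)) - 1) :=
          le_of_mul_le_mul_right this (hzpos _)
        have : (|m| : ℝ) = (2:ℝ) ^ (((p:ℤ)) - 1) := le_antisymm hmle hm1'
        rw [habs, this, ← zpow_add₀ (by norm_num : (2:ℝ) ≠ 0)]
        ring_nf
  · rintro (hgt | ⟨heq, habs2⟩)
    · rw [habs]
      have : (|m| : ℝ) * (2:ℝ) ^ (ey - ((p:ℤ) - 1)) < (2:ℝ) ^ ((p:ℤ)) * (2:ℝ) ^ (ey - ((p:ℤ) - 1)) :=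
        mul_lt_mul_of_pos_right hm2' (hzpos _)
      have h2' : (2:ℝ) ^ ((p:ℤ)) * (2:ℝ) ^ (ey - ((p:ℤ) - 1)) = (2:ℝ) ^ (ey + 1) := by
        rw [← zpow_add₀ (by norm_num : (2:ℝ) ≠ 0)]; ring_nf
      have h3 : (2:ℝ) ^ (ey + 1) ≤ (2:ℝ) ^ (ex - (p:ℤ)) := by
        apply zpow_le_zpow_right₀ (by norm_num : (1:ℝ) ≤ 2)
        omega
      linarith [this, h2'.le]
    · rw [habs2]
      apply zpow_le_zpow_right₀ (by norm_num : (1:ℝ) ≤ 2)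
      omega
end
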